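/- In the one-dimensional model with x ≡ 1 (i.e., y_n = θ* + ε_n and SGD update θ_n = θ_{n−1} + γ(y_n − θ_{n−1})), the conditional expected increment of the Pflug statistic is Δ(θ) = E[∇ℓ_{n+1}∇ℓ_n | θ_{n−1} = θ] = (1 − γ)(θ − θ*)² − γσ². In particular, if γ ≥ 1 then Δ(θ) < 0 for every θ ∈ ℝ, so the diagnostic decreases in expectation everywhere even though SGD itself diverges for γ > 2. -/

import Mathlib

open MeasureTheory

/-- One-dimensional model `y = θ* + ε` with SGD update
`θ_n = θ_{n-1} + γ (y_n - θ_{n-1})` under quadratic loss; stochastic gradient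
`∇ℓ_n = -(y_n - θ_{n-1})`.  Conditional on `θ_{n-1} = θ`, drawing two fresh
i.i.d. noises `e₁, e₂ ~ ν`, the expected increment of the Pflug statistic is
`Δ(θ) = E[∇ℓ_{n+1} ∇ℓ_n | θ_{n-1} = θ] = (1 - γ)(θ - θ*)² - γ σ²`; and if
`γ ≥ 1` then `Δ(θ) < 0` for every `θ`. -/
theorem pflug_diagnostic_one_dim_explicit
    (ν : Measure ℝ) [IsProbabilityMeasure ν]
    (θstar σ2 γ : ℝ) (hγ : 0 < γ) (hσ2 : 0 < σ2)
    (hmean : ∫ e, e ∂ν = 0) (hvar : ∫ e, e ^ 2 ∂ν = σ2)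
    (hint1 : Integrable (fun e : ℝ => e) ν)
    (hint2 : Integrable (fun e : ℝ => e ^ 2) ν)
    -- Δ(θ): expectation of ∇ℓ_{n+1}·∇ℓ_n given θ_{n-1} = θ, where
    -- y₁ = θ* + e₁, θ_n = θ + γ(y₁ - θ), y₂ = θ* + e₂,
    -- ∇ℓ_n = -(y₁ - θ), ∇ℓ_{n+1} = -(y₂ - θ_n).
    (Δ : ℝ → ℝ)
    (hΔ : ∀ θ : ℝ, Δ θ =
      ∫ e₁, ∫ e₂,
        (-((θstar + e₂) - (θ + γ * ((θstar + e₁) - θ)))) *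
        (-((θstar + e₁) - θ)) ∂ν ∂ν) :
    (∀ θ : ℝ, Δ θ = (1 - γ) * (θ - θstar) ^ 2 - γ * σ2) ∧
    (1 ≤ γ → ∀ θ : ℝ, Δ θ < 0) := by
  have key : ∀ θ : ℝ, Δ θ = (1 - γ) * (θ - θstar) ^ 2 - γ * σ2 := by
    intro θ
    rw [hΔ θ]
    set a : ℝ := θstar - θ with ha
    have inner : ∀ e₁ : ℝ,
        (∫ e₂, (-((θstar + e₂) - (θ + γ * ((θstar + e₁) - θ)))) *
          (-((θstar + e₁) - θ)) ∂ν) = (a + e₁) * (a - γ * (a + e₁)) := by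
      intro e₁
      have heq : (fun e₂ : ℝ => (-((θstar + e₂) - (θ + γ * ((θstar + e₁) - θ)))) *
          (-((θstar + e₁) - θ)))
          = fun e₂ : ℝ => (a + e₁) * (a - γ * (a + e₁)) + (a + e₁) * e₂ := by
        funext e₂; ring
      rw [heq, integral_add (integrable_const _) (hint1.const_mul _),
        integral_const_mul _ (fun e : ℝ => e), hmean, integral_const]
      simp
    simp only [inner]
    have heq2 : (fun e₁ : ℝ => (a + e₁) * (a - γ * (a + e₁)))
        = fun e₁ : ℝ => (1 - γ) * a ^ 2 + (((1 - 2 * γ) * a) * e₁ + (-γ) * e₁ ^ 2) := by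
      funext e₁; ring
    have hI1 : Integrable (fun e₁ : ℝ => ((1 - 2 * γ) * a) * e₁) ν := hint1.const_mul _
    have hI2 : Integrable (fun e₁ : ℝ => (-γ) * e₁ ^ 2) ν := hint2.const_mul _
    have hI12 : Integrable (fun e₁ : ℝ => ((1 - 2 * γ) * a) * e₁ + (-γ) * e₁ ^ 2) ν :=
      hI1.add hI2
    rw [heq2, integral_add (integrable_const _) hI12,
      integral_add hI1 hI2, integral_const_mul _ (fun e : ℝ => e),
      integral_const_mul _ (fun e : ℝ => e ^ 2), hmean, hvar, integral_const]
    simp only [measure_univ, probReal_univ, ENNReal.toReal_one, smul_eq_mul, one_mul, mul_zero, zero_add]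
    have : a ^ 2 = (θ - θstar) ^ 2 := by rw [ha]; ring
    rw [this]; ring
  refine ⟨key, fun hγ1 θ => ?_⟩
  rw [key θ]
  have h1 : (1 - γ) * (θ - θstar) ^ 2 ≤ 0 :=
    mul_nonpos_of_nonpos_of_nonneg (by linarith) (sq_nonneg _)
  nlinarith
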